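/- Let 0 < γ < β and x₀ ∈ (0,1] with βx₀ > γ. The peak infected fraction y_max(β) = (γ/β)·log(γ/(βx₀)) - γ/β + x₀ + y₀, viewed as a function of β on (γ/x₀, ∞), is strictly increasing in β. -/

import Mathlib

theorem stmt_19 (γ x₀ y₀ : ℝ) (hγ : 0 < γ) (hx₀ : x₀ ∈ Set.Ioc (0 : ℝ) 1) (hy₀ : 0 < y₀) :
    StrictMonoOn
      (fun β : ℝ => (γ / β) * Real.log (γ / (β * x₀)) - γ / β + x₀ + y₀)
      (Set.Ioi (γ / x₀)) := by
  obtain ⟨hx0, hx1⟩ := hx₀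
  have hγx : 0 < γ / x₀ := div_pos hγ hx0
  have key : ∀ b ∈ Set.Ioi (γ / x₀),
      HasDerivAt (fun β : ℝ => (γ / β) * Real.log (γ / (β * x₀)) - γ / β + x₀ + y₀)
        (-(γ / b ^ 2) * Real.log (γ / (b * x₀))) b := by
    intro b hb
    have hb0 : 0 < b := lt_trans hγx hb
    have hbx : γ < b * x₀ := by
      have := (div_lt_iff₀ hx0).mp hb
      linarith
    have hbx0 : (0:ℝ) < b * x₀ := by positivity
    have harg : 0 < γ / (b * x₀) := div_pos hγ hbx0
    have h1 : HasDerivAt (fun β : ℝ => γ / β) ((0 * b - γ * 1) / b ^ 2) b :=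
      (hasDerivAt_const b γ).div (hasDerivAt_id b) hb0.ne'
    have h2 : HasDerivAt (fun β : ℝ => γ / (β * x₀))
        ((0 * (b * x₀) - γ * (1 * x₀)) / (b * x₀) ^ 2) b :=
      (hasDerivAt_const b γ).div ((hasDerivAt_id b).mul_const x₀) hbx0.ne'
    have hlog : HasDerivAt (fun β : ℝ => Real.log (γ / (β * x₀)))
        (((0 * (b * x₀) - γ * (1 * x₀)) / (b * x₀) ^ 2) / (γ / (b * x₀))) b :=
      h2.log harg.ne'
    have h := (((h1.mul hlog).sub h1).add_const x₀).add_const y₀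
    refine h.congr_deriv ?_
    field_simp
    ring
  apply strictMonoOn_of_deriv_pos (convex_Ioi _)
  · intro b hb
    exact (key b hb).continuousAt.continuousWithinAt
  · intro b hb
    rw [interior_Ioi] at hb
    rw [(key b hb).deriv]
    have hb0 : 0 < b := lt_trans hγx hb
    have hbx : γ < b * x₀ := by
      have := (div_lt_iff₀ hx0).mp hb
      linarith
    have hbx0 : (0:ℝ) < b * x₀ := by positivity
    have hlt : γ / (b * x₀) < 1 := (div_lt_one hbx0).mpr hbx
    have hlog : Real.log (γ / (b * x₀)) < 0 :=
      Real.log_neg (div_pos hγ hbx0) hlt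
    have : -(γ / b ^ 2) * Real.log (γ / (b * x₀))
        = (γ / b ^ 2) * (-Real.log (γ / (b * x₀))) := by ring
    rw [this]
    exact mul_pos (by positivity) (by linarith)
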